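/- Let A be a generalized Boolean algebra and let K_A := {(σ(a))ᶜ : a ∈ A}, where σ(a) = {P ∈ Ul(A) : a ∈ P} and complements are taken in Ul(A). Then K_A is a basis for a topology τ on Ul(A), and the pair (Ul(A), K_A), with Ul(A) equipped with τ, is a generalized Stone space; that is: (S1) for all distinct maximal filters P ≠ Q there exists U ∈ K_A with P ∈ U and Q ∉ U; (S2) every element of K_A is compact in τ; (S3) A ∩ Bᶜ ∈ K_A for all A, B ∈ K_A; (S4) A ∪ B ∈ K_A for all A, B ∈ K_A; (S5) for every τ-closed subset Y of Ul(A) and every nonempty downward-directed subfamily I of K_A, if Y ∩ U ≠ ∅ for each U ∈ I, then Y ∩ ⋂I ≠ ∅. -/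

import Mathlib

open Set

/-- A generalized Boolean algebra in the sense of Stone: a generalized Heyting algebra
satisfying `a ⊔ b = (a ⇨ b) ⇨ b`. -/
class GenBoolAlg (A : Type*) extends GeneralizedHeytingAlgebra A where
  sup_eq_himp_himp : ∀ a b : A, a ⊔ b = (a ⇨ b) ⇨ b

/-- A filter of a generalized Boolean algebra: a subset containing `⊤` (hence nonempty),
upward closed and closed under meets. -/
def IsGBAFilter {A : Type*} [GenBoolAlg A] (F : Set A) : Prop :=
  ⊤ ∈ F ∧ (∀ a ∈ F, ∀ b : A, a ≤ b → b ∈ F) ∧ (∀ a ∈ F, ∀ b ∈ F, a ⊓ b ∈ F)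

/-- A maximal filter: a proper filter whose only extensions among filters are itself and
the whole algebra. -/
def IsMaxGBAFilter {A : Type*} [GenBoolAlg A] (F : Set A) : Prop :=
  IsGBAFilter F ∧ F ≠ Set.univ ∧
    ∀ G : Set A, IsGBAFilter G → F ⊆ G → G = F ∨ G = Set.univ

open TopologicalSpace

/-- A family of sets is downward-directed if any two members contain a common member. -/
def DirDown {X : Type*} (F : Set (Set X)) : Prop :=
  ∀ U ∈ F, ∀ V ∈ F, ∃ W ∈ F, W ⊆ U ∩ V

/-- `(X, K)` is a generalized Stone space. -/
structure IsGenStone {X : Type*} [TopologicalSpace X] (K : Set (Set X)) : Prop where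
  sep : ∀ x y : X, x ≠ y → ∃ U ∈ K, x ∈ U ∧ y ∉ U
  basis : IsTopologicalBasis K
  compact : ∀ U ∈ K, IsCompact U
  diff_mem : ∀ A ∈ K, ∀ B ∈ K, A ∩ Bᶜ ∈ K
  union_mem : ∀ A ∈ K, ∀ B ∈ K, A ∪ B ∈ K
  dir_inter : ∀ Y : Set X, IsClosed Y → ∀ I ⊆ K, I.Nonempty → DirDown I →
    (∀ U ∈ I, (Y ∩ U).Nonempty) → (Y ∩ ⋂₀ I).Nonempty

/-- The dual family `D_K(X)` of sets whose complement lies in `K`. -/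
def DK {X : Type*} (K : Set (Set X)) : Set (Set X) := {U | Uᶜ ∈ K}

/-- The set of maximal filters of `A`. -/
def Ul (A : Type*) [GenBoolAlg A] : Type _ := {F : Set A // IsMaxGBAFilter F}

/-- The Stone map `σ(a) = {P ∈ Ul(A) : a ∈ P}`. -/
def sigmaMap {A : Type*} [GenBoolAlg A] (a : A) : Set (Ul A) := {P : Ul A | a ∈ P.1}

/-- The family `K_A = {(σ a)ᶜ : a ∈ A}` of subsets of `Ul(A)`. -/
def KA (A : Type*) [GenBoolAlg A] : Set (Set (Ul A)) :=
  Set.range fun a : A => (sigmaMap a)ᶜ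

/-- The topology on `Ul(A)` generated by the basis `K_A`. -/
instance (A : Type*) [GenBoolAlg A] : TopologicalSpace (Ul A) :=
  generateFrom (KA A)

section algebra
variable {A : Type*} [GenBoolAlg A]

lemma sup_himp_top (a x : A) : a ⊔ (a ⇨ x) = ⊤ := by
  rw [GenBoolAlg.sup_eq_himp_himp,
    show a ⇨ a ⇨ x = a ⇨ x from by rw [himp_himp, inf_idem], himp_self]

lemma filt_up {F : Set A} (h : IsGBAFilter F) {a b : A} (ha : a ∈ F) (hab : a ≤ b) : b ∈ F :=
  h.2.1 a ha b hab

lemma filt_mp {F : Set A} (h : IsGBAFilter F) {a b : A} (ha : a ∈ F) (hab : a ⇨ b ∈ F) :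
    b ∈ F :=
  filt_up h (h.2.2 _ hab a ha) (le_himp_iff.mp le_rfl)

def genF (F : Set A) (a : A) : Set A := {y | ∃ p ∈ F, p ⊓ a ≤ y}

lemma genF_filter {F : Set A} (h : IsGBAFilter F) (a : A) : IsGBAFilter (genF F a) := by
  refine ⟨⟨⊤, h.1, le_top⟩, ?_, ?_⟩
  · rintro x ⟨p, hp, hpx⟩ b hxb; exact ⟨p, hp, hpx.trans hxb⟩
  · rintro x ⟨p, hp, hpx⟩ y ⟨q, hq, hqy⟩
    refine ⟨p ⊓ q, h.2.2 p hp q hq, ?_⟩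
    calc p ⊓ q ⊓ a ≤ (p ⊓ a) ⊓ (q ⊓ a) :=
          le_inf (inf_le_inf_right a inf_le_left) (inf_le_inf_right a inf_le_right)
      _ ≤ x ⊓ y := inf_le_inf hpx hqy

lemma subset_genF (F : Set A) (a : A) : F ⊆ genF F a := fun x hx => ⟨x, hx, inf_le_left⟩

lemma mem_genF {F : Set A} (h : IsGBAFilter F) (a : A) : a ∈ genF F a :=
  ⟨⊤, h.1, inf_le_right⟩

lemma max_himp_mem {P : Set A} (hP : IsMaxGBAFilter P) {g : A} (hg : g ∉ P) (x : A) :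
    g ⇨ x ∈ P := by
  rcases hP.2.2 (genF P g) (genF_filter hP.1 g) (subset_genF P g) with h | h
  · exact absurd (h ▸ mem_genF hP.1 g) hg
  · have hx : x ∈ genF P g := h ▸ mem_univ x
    obtain ⟨p, hp, hpx⟩ := hx
    exact filt_up hP.1 hp (le_himp_iff.mpr hpx)

lemma max_prime {P : Set A} (hP : IsMaxGBAFilter P) {x y : A} (hxy : x ⊔ y ∈ P)
    (hx : x ∉ P) : y ∈ P := by
  have h1 : x ⇨ y ∈ P := max_himp_mem hP hx y
  refine filt_up hP.1 (hP.1.2.2 _ hxy _ h1) ?_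
  rw [inf_sup_right]
  refine sup_le ?_ inf_le_left
  rw [inf_comm]
  exact le_himp_iff.mp le_rfl

/-- Zorn: extend a filter avoiding `a` to a maximal filter avoiding `a`. -/
lemma exists_max_filter {F : Set A} (hF : IsGBAFilter F) {a : A} (ha : a ∉ F) :
    ∃ M : Set A, IsMaxGBAFilter M ∧ F ⊆ M ∧ a ∉ M := by
  obtain ⟨M, hFM, hMmem, hMmax⟩ :
      ∃ M, F ⊆ M ∧ (IsGBAFilter M ∧ F ⊆ M ∧ a ∉ M) ∧
        ∀ G, (IsGBAFilter G ∧ F ⊆ G ∧ a ∉ G) → M ⊆ G → G = M := by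
    obtain ⟨M, hFM, hmax⟩ := zorn_subset_nonempty {G | IsGBAFilter G ∧ F ⊆ G ∧ a ∉ G}
      (fun c hcS hchain hcne => by
        refine ⟨⋃₀ c, ⟨⟨?_, ?_, ?_⟩, ?_, ?_⟩, fun s hs => subset_sUnion_of_mem hs⟩
        · obtain ⟨G, hG⟩ := hcne; exact ⟨G, hG, (hcS hG).1.1⟩
        · rintro x ⟨G, hG, hxG⟩ b hxb; exact ⟨G, hG, (hcS hG).1.2.1 x hxG b hxb⟩
        · rintro x ⟨G, hG, hxG⟩ y ⟨G', hG', hyG'⟩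
          rcases hchain.total hG hG' with h | h
          · exact ⟨G', hG', (hcS hG').1.2.2 x (h hxG) y hyG'⟩
          · exact ⟨G, hG, (hcS hG).1.2.2 x hxG y (h hyG')⟩
        · obtain ⟨G, hG⟩ := hcne; exact (subset_sUnion_of_mem hG).trans' (hcS hG).2.1
        · rintro ⟨G, hG, haG⟩; exact (hcS hG).2.2 haG) F ⟨hF, subset_rfl, ha⟩
    exact ⟨M, hFM, hmax.1, fun G hG hMG => subset_antisymm (hmax.2 hG hMG) hMG⟩
  obtain ⟨hMfilt, _, haM⟩ := hMmem
  -- step: anything outside M gives relative complement toward a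
  have hstep : ∀ x ∉ M, x ⇨ a ∈ M := by
    intro x hx
    by_cases hag : a ∈ genF M x
    · obtain ⟨p, hp, hpa⟩ := hag
      exact filt_up hMfilt hp (le_himp_iff.mpr hpa)
    · have := hMmax (genF M x) ⟨genF_filter hMfilt x, hFM.trans (subset_genF M x), hag⟩
        (subset_genF M x)
      exact absurd (this ▸ mem_genF hMfilt x) hx
  -- primeness of M
  have hprime : ∀ x y : A, x ⊔ y ∈ M → x ∈ M ∨ y ∈ M := by
    intro x y hxy
    by_contra h
    push_neg at h
    have hxa := hstep x h.1
    have hya := hstep y h.2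
    have hm : (x ⊔ y) ⊓ ((x ⇨ a) ⊓ (y ⇨ a)) ∈ M :=
      hMfilt.2.2 _ hxy _ (hMfilt.2.2 _ hxa _ hya)
    refine haM (filt_up hMfilt hm ?_)
    rw [inf_sup_right]
    refine sup_le ?_ ?_
    · exact (inf_le_inf_left x inf_le_left).trans (by rw [inf_comm]; exact le_himp_iff.mp le_rfl)
    · exact (inf_le_inf_left y inf_le_right).trans (by rw [inf_comm]; exact le_himp_iff.mp le_rfl)
  refine ⟨M, ⟨hMfilt, fun hu => haM (hu ▸ mem_univ a), ?_⟩, hFM, haM⟩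
  intro G hG hMG
  by_cases hGM : G ⊆ M
  · exact Or.inl (subset_antisymm hGM hMG)
  · right
    obtain ⟨g, hgG, hgM⟩ := not_subset.mp hGM
    refine eq_univ_of_forall fun x => ?_
    have htop : g ⊔ (g ⇨ x) ∈ M := (sup_himp_top g x) ▸ hMfilt.1
    rcases hprime _ _ htop with h | h
    · exact absurd h hgM
    · exact filt_mp hG hgG (hMG h)

lemma ul_proper (P : Ul A) : ∃ a : A, a ∉ P.1 := by
  exact (Set.ne_univ_iff_exists_notMem _).mp P.2.2.1

lemma mem_sigma {a : A} {P : Ul A} : P ∈ sigmaMap a ↔ a ∈ P.1 := Iff.rfl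

lemma sigma_himp (a b : A) : sigmaMap (a ⇨ b) = (sigmaMap a)ᶜ ∪ sigmaMap b := by
  ext P
  simp only [mem_sigma, mem_union, mem_compl_iff]
  constructor
  · intro h
    by_cases ha : a ∈ P.1
    · exact Or.inr (filt_mp P.2.1 ha h)
    · exact Or.inl ha
  · rintro (h | h)
    · exact max_himp_mem P.2 h b
    · exact filt_up P.2.1 h le_himp

lemma sigma_sup (a b : A) : sigmaMap (a ⊔ b) = sigmaMap a ∪ sigmaMap b := by
  ext P
  simp only [mem_sigma, mem_union]
  constructor
  · intro h
    by_cases ha : a ∈ P.1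
    · exact Or.inl ha
    · exact Or.inr (max_prime P.2 h ha)
  · rintro (h | h)
    · exact filt_up P.2.1 h le_sup_left
    · exact filt_up P.2.1 h le_sup_right

lemma sigma_inf (a b : A) : sigmaMap (a ⊓ b) = sigmaMap a ∩ sigmaMap b := by
  ext P
  simp only [mem_sigma, mem_inter_iff]
  exact ⟨fun h => ⟨filt_up P.2.1 h inf_le_left, filt_up P.2.1 h inf_le_right⟩,
    fun ⟨h1, h2⟩ => P.2.1.2.2 a h1 b h2⟩

lemma sigma_mono {a b : A} (h : a ≤ b) : sigmaMap a ⊆ sigmaMap b :=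
  fun P hP => filt_up P.2.1 hP h

lemma finset_inf_mem {P : Set A} (hP : IsGBAFilter P) (T : Finset A)
    (h : ∀ b ∈ T, b ∈ P) : T.inf id ∈ P := by
  classical
  induction T using Finset.induction with
  | empty => simpa using hP.1
  | insert c T' hx ih =>
    rw [Finset.inf_insert]
    exact hP.2.2 _ (h c (Finset.mem_insert_self c T')) _
      (ih fun b hb => h b (Finset.mem_insert_of_mem hb))

lemma basisKA : IsTopologicalBasis (KA A) := by
  refine ⟨?_, ?_, rfl⟩
  · rintro _ ⟨a, rfl⟩ _ ⟨b, rfl⟩ P hP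
    refine ⟨(sigmaMap (a ⊔ b))ᶜ, ⟨a ⊔ b, rfl⟩, ?_, ?_⟩
    · rw [sigma_sup]; exact fun h => h.elim (fun h => hP.1 h) fun h => hP.2 h
    · rw [sigma_sup]; intro Q hQ
      exact ⟨fun h => hQ (Or.inl h), fun h => hQ (Or.inr h)⟩
  · refine eq_univ_of_forall fun P => ?_
    obtain ⟨a, ha⟩ := ul_proper P
    exact ⟨(sigmaMap a)ᶜ, ⟨a, rfl⟩, ha⟩

lemma sigma_open (b : A) : IsOpen (sigmaMap b) := by
  rw [basisKA.isOpen_iff]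
  intro P hP
  obtain ⟨c, hc⟩ := ul_proper P
  refine ⟨(sigmaMap (b ⇨ c))ᶜ, ⟨b ⇨ c, rfl⟩, ?_, ?_⟩
  · intro h
    exact hc (filt_mp P.2.1 hP h)
  · intro Q hQ
    rw [mem_compl_iff, mem_sigma] at hQ
    by_contra hb
    exact hQ (max_himp_mem Q.2 hb c)

lemma KA_closed {U : Set (Ul A)} (hU : U ∈ KA A) : IsClosed U := by
  obtain ⟨b, rfl⟩ := hU
  exact (sigma_open b).isClosed_compl

/-- core compactness: covers by basic sets reduce to finite subcovers. -/
lemma core_compact {a : A} {S : Set A}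
    (h : (sigmaMap a)ᶜ ⊆ ⋃ b ∈ S, (sigmaMap b)ᶜ) :
    ∃ T : Finset A, ↑T ⊆ S ∧ (sigmaMap a)ᶜ ⊆ ⋃ b ∈ T, (sigmaMap b)ᶜ := by
  classical
  set F : Set A := {x | ∃ T : Finset A, ↑T ⊆ S ∧ T.inf id ≤ x} with hFdef
  have hF : IsGBAFilter F := by
    refine ⟨⟨∅, by simp⟩, ?_, ?_⟩
    · rintro x ⟨T, hTS, hT⟩ b hxb; exact ⟨T, hTS, hT.trans hxb⟩
    · rintro x ⟨T, hTS, hT⟩ y ⟨T', hTS', hT'⟩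
      refine ⟨T ∪ T', by rw [Finset.coe_union]; exact union_subset hTS hTS', ?_⟩
      rw [Finset.inf_union]
      exact inf_le_inf hT hT'
  by_cases ha : a ∈ F
  · obtain ⟨T, hTS, hT⟩ := ha
    refine ⟨T, hTS, fun P hP => ?_⟩
    by_contra hPU
    simp only [mem_iUnion, mem_compl_iff, mem_sigma, exists_prop, not_exists, not_and,
      not_not] at hPU
    exact hP (filt_up P.2.1 (finset_inf_mem P.2.1 T hPU) hT)
  · obtain ⟨M, hM, hFM, haM⟩ := exists_max_filter hF ha
    have hMU : (⟨M, hM⟩ : Ul A) ∈ ⋃ b ∈ S, (sigmaMap b)ᶜ := h (show (⟨M, hM⟩ : Ul A) ∈ (sigmaMap a)ᶜ from haM)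
    replace hMU := mem_iUnion₂.mp hMU
    obtain ⟨b, hbS, hbM⟩ := hMU
    exact absurd (hFM ⟨{b}, by simpa using hbS, by simp⟩) hbM

lemma KA_compact {U : Set (Ul A)} (hU : U ∈ KA A) : IsCompact U := by
  obtain ⟨a, rfl⟩ := hU
  rw [isCompact_iff_finite_subcover]
  intro ι Uo hUo hcov
  classical
  set S : Set A := {b | ∃ i : ι, (sigmaMap b)ᶜ ⊆ Uo i} with hSdef
  have hcov' : (sigmaMap a)ᶜ ⊆ ⋃ b ∈ S, (sigmaMap b)ᶜ := by
    intro P hP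
    obtain ⟨i, hi⟩ := mem_iUnion.mp (hcov hP)
    obtain ⟨V, hVK, hPV, hVsub⟩ := basisKA.isOpen_iff.mp (hUo i) P hi
    obtain ⟨b, rfl⟩ := hVK
    exact mem_iUnion₂.mpr ⟨b, ⟨i, hVsub⟩, hPV⟩
  obtain ⟨T, hTS, hTcov⟩ := core_compact hcov'
  choose f hf using fun (b : A) (hb : b ∈ S) => hb
  refine ⟨T.attach.image fun b => f b.1 (hTS b.2), fun P hP => ?_⟩
  obtain ⟨b, hbT, hbP⟩ := mem_iUnion₂.mp (hTcov hP)
  refine mem_iUnion₂.mpr ⟨f b (hTS hbT), ?_, hf b (hTS hbT) hbP⟩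
  exact Finset.mem_image.mpr ⟨⟨b, hbT⟩, Finset.mem_attach _ _, rfl⟩

end algebra

/-- `(Ul(A), K_A)` is a generalized Stone space: `K_A` is a basis of compact sets for the
generated topology, separates points, is closed under `A ∩ Bᶜ` and `A ∪ B`, and satisfies
the directed-intersection condition. -/
theorem stmt13 (A : Type*) [GenBoolAlg A] : IsGenStone (KA A) := by
  refine ⟨?_, basisKA, fun U hU => KA_compact hU, ?_, ?_, ?_⟩
  · -- separation
    intro P Q hPQ
    have hQP : ¬ Q.1 ⊆ P.1 := by
      intro hsub
      rcases Q.2.2.2 P.1 P.2.1 hsub with h | h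
      · exact hPQ (Subtype.ext h)
      · exact P.2.2.1 h
    obtain ⟨a, haQ, haP⟩ := not_subset.mp hQP
    exact ⟨(sigmaMap a)ᶜ, ⟨a, rfl⟩, haP, fun h => h haQ⟩
  · -- diff
    rintro _ ⟨a, rfl⟩ _ ⟨b, rfl⟩
    refine ⟨b ⇨ a, ?_⟩
    show (sigmaMap (b ⇨ a))ᶜ = _
    rw [sigma_himp]
    ext P
    simp only [mem_compl_iff, mem_union, mem_inter_iff, mem_sigma]
    tauto
  · -- union
    rintro _ ⟨a, rfl⟩ _ ⟨b, rfl⟩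
    refine ⟨a ⊓ b, ?_⟩
    show (sigmaMap (a ⊓ b))ᶜ = _
    rw [sigma_inf, compl_inter]
  · -- directed intersections
    intro Y hY I hIK hIne hdir hnon
    obtain ⟨U₀, hU₀⟩ := hIne
    haveI : Nonempty I := ⟨⟨U₀, hU₀⟩⟩
    set Z : I → Set (Ul A) := fun U => Y ∩ (U₀ ∩ U.1) with hZdef
    have hZd : Directed (· ⊇ ·) Z := by
      rintro ⟨U, hU⟩ ⟨V, hV⟩
      obtain ⟨W, hW, hWsub⟩ := hdir U hU V hV
      exact ⟨⟨W, hW⟩, fun x hx => ⟨hx.1, hx.2.1, (hWsub hx.2.2).1⟩,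
        fun x hx => ⟨hx.1, hx.2.1, (hWsub hx.2.2).2⟩⟩
    have hZn : ∀ U : I, (Z U).Nonempty := by
      rintro ⟨U, hU⟩
      obtain ⟨W, hW, hWsub⟩ := hdir U₀ hU₀ U hU
      obtain ⟨P, hPY, hPW⟩ := hnon W hW
      exact ⟨P, hPY, (hWsub hPW).1, (hWsub hPW).2⟩
    have hZcl : ∀ U : I, IsClosed (Z U) := fun U =>
      hY.inter ((KA_closed (hIK hU₀)).inter (KA_closed (hIK U.2)))
    have hZc : ∀ U : I, IsCompact (Z U) := fun U =>
      (KA_compact (hIK hU₀)).of_isClosed_subset (hZcl U)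
        (fun x hx => hx.2.1)
    obtain ⟨P, hP⟩ := IsCompact.nonempty_iInter_of_directed_nonempty_isCompact_isClosed
      Z hZd hZn hZc hZcl
    refine ⟨P, (mem_iInter.mp hP ⟨U₀, hU₀⟩).1, ?_⟩
    intro U hU
    exact (mem_iInter.mp hP ⟨U, hU⟩).2.2
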